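/- Define elliptic Fibonacci numbers by S₀ = 0, S₁ = 1, and S_n(a,b;q,p) = S_{n-1}(aq,bq²;q,p) + [θ(aq^{1+n},aq^{2+n},bq⁵,aq^{1-n}/b,aq^{-n}/b;p)/θ(aq³,aq⁴,bq^{1+2n},a/(bq),a/(bq²);p)]·q^{n-2}·S_{n-2}(aq²,bq⁴;q,p) for n ≥ 2. Let x satisfy x·f(a,b) = f(aq,bq²)·x and let η_{a,b;q,p}(c(a,b)x^n) = c(a,b)·[θ(aq^{1+n},aq^{2+n},bq,aq^{1-n}/b,aq^{-n}/b;p)/θ(aq,aq²,bq^{1+2n},aq/b,a/b;p)]q^n x^n. Then, as formal power series, (1 − x − x²·η_{a,b;q,p}) · (Σ_{n≥0} S_n(a,b;q,p)x^n) = x; equivalently Σ_{n≥0} S_n(a,b;q,p)x^n = (1 − x − x²η_{a,b;q,p})^{-1}x. -/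

import Mathlib

/-- The modified Jacobi theta function `θ(x;p) = ∏_{j ≥ 0} (1 - p^j x)(1 - p^{j+1}/x)`. -/
noncomputable def theta (x p : ℂ) : ℂ :=
  ∏' j : ℕ, ((1 - p ^ j * x) * (1 - p ^ (j + 1) / x))

/- Formal power series in the noncommuting variable `x` (which shifts `a ↦ aq`, `b ↦ bq²`)
are modelled by functions `m : ℕ → ℤ → ℤ → ℂ`, where `m n i j` is the coefficient
`c_n(aq^i, bq^j)` of `x^n`. -/

/-- The operator `x`: multiplication by `x` with the shifts `a ↦ aq`, `b ↦ bq²`. -/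
def opX (m : ℕ → ℤ → ℤ → ℂ) : ℕ → ℤ → ℤ → ℂ
  | 0, _, _ => 0
  | n + 1, i, j => m n (i + 1) (j + 2)

/-- The linear operator `η_{a,b;q,p}(c(a,b)x^n) = c(a,b)·
[θ(aq^{1+n}, aq^{2+n}, bq, aq^{1-n}/b, aq^{-n}/b;p)/θ(aq, aq², bq^{1+2n}, aq/b, a/b;p)]·q^n·x^n`. -/
noncomputable def opEta (a b q p : ℂ) (m : ℕ → ℤ → ℤ → ℂ) : ℕ → ℤ → ℤ → ℂ :=
  fun n i j =>
    m n i j *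
      (theta (a * q ^ (i + 1 + (n : ℤ))) p * theta (a * q ^ (i + 2 + (n : ℤ))) p *
        theta (b * q ^ (j + 1)) p * theta (a * q ^ (i + 1 - (n : ℤ)) / (b * q ^ j)) p *
        theta (a * q ^ (i - (n : ℤ)) / (b * q ^ j)) p) /
      (theta (a * q ^ (i + 1)) p * theta (a * q ^ (i + 2)) p *
        theta (b * q ^ (j + 1 + 2 * (n : ℤ))) p * theta (a * q ^ (i + 1) / (b * q ^ j)) p *
        theta (a * q ^ i / (b * q ^ j)) p) * q ^ (n : ℤ)

/-- The elliptic Fibonacci numbers, given by `S₀ = 0`, `S₁ = 1`, and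
`S_n(a,b) = S_{n-1}(aq, bq²) + [θ(aq^{1+n},aq^{2+n},bq⁵,aq^{1-n}/b,aq^{-n}/b;p)/
θ(aq³,aq⁴,bq^{1+2n},a/(bq),a/(bq²);p)]·q^{n-2}·S_{n-2}(aq², bq⁴)`, satisfy
`(1 − x − x²·η_{a,b;q,p})·(∑_{n≥0} S_n(a,b)x^n) = x` coefficientwise; here
`S n i j` denotes `S_n(aq^i, bq^j)`. -/
theorem stmt16 (a b q p : ℂ) (hp : ‖p‖ < 1) (hq0 : q ≠ 0)
    (S : ℕ → ℤ → ℤ → ℂ)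
    (hS0 : ∀ i j : ℤ, S 0 i j = 0)
    (hS1 : ∀ i j : ℤ, S 1 i j = 1)
    (hSrec : ∀ (n : ℕ) (i j : ℤ), S (n + 2) i j =
      S (n + 1) (i + 1) (j + 2) +
        (theta (a * q ^ (i + (n : ℤ) + 3)) p * theta (a * q ^ (i + (n : ℤ) + 4)) p *
          theta (b * q ^ (j + 5)) p * theta (a * q ^ (i - (n : ℤ) - 1) / (b * q ^ j)) p *
          theta (a * q ^ (i - (n : ℤ) - 2) / (b * q ^ j)) p) /
        (theta (a * q ^ (i + 3)) p * theta (a * q ^ (i + 4)) p *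
          theta (b * q ^ (j + 2 * (n : ℤ) + 5)) p * theta (a * q ^ (i - 1) / (b * q ^ j)) p *
          theta (a * q ^ (i - 2) / (b * q ^ j)) p) * q ^ (n : ℤ) *
        S n (i + 2) (j + 4)) :
    ∀ (n : ℕ) (i j : ℤ),
      S n i j - opX S n i j - opX (opX (opEta a b q p S)) n i j =
        if n = 1 then 1 else 0 := by
  have hz : ∀ u v : ℤ, a * q ^ (u + 4) / (b * q ^ (v + 4)) = a * q ^ u / (b * q ^ v) := by
    intro u v
    rw [zpow_add₀ hq0 u 4, zpow_add₀ hq0 v 4, ← mul_assoc, ← mul_assoc,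
      mul_div_mul_right _ _ (zpow_ne_zero 4 hq0)]
  intro n i j
  match n with
  | 0 => simp [opX, hS0]
  | 1 => simp [opX, hS0, hS1]
  | (n + 2) =>
    simp only [opX, opEta, hSrec]
    have e1 : a * q ^ (i + 1 + 1 + 1 - (n : ℤ)) / (b * q ^ (j + 2 + 2))
        = a * q ^ (i - (n : ℤ) - 1) / (b * q ^ j) := by
      rw [show i + 1 + 1 + 1 - (n : ℤ) = i - (n : ℤ) - 1 + 4 by ring,
        show (j : ℤ) + 2 + 2 = j + 4 by ring, hz]
    have e2 : a * q ^ (i + 1 + 1 - (n : ℤ)) / (b * q ^ (j + 2 + 2))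
        = a * q ^ (i - (n : ℤ) - 2) / (b * q ^ j) := by
      rw [show i + 1 + 1 - (n : ℤ) = i - (n : ℤ) - 2 + 4 by ring,
        show (j : ℤ) + 2 + 2 = j + 4 by ring, hz]
    have e3 : a * q ^ ((i : ℤ) + 1 + 1 + 1) / (b * q ^ (j + 2 + 2))
        = a * q ^ (i - 1) / (b * q ^ j) := by
      rw [show (i : ℤ) + 1 + 1 + 1 = i - 1 + 4 by ring,
        show (j : ℤ) + 2 + 2 = j + 4 by ring, hz]
    have e4 : a * q ^ ((i : ℤ) + 1 + 1) / (b * q ^ (j + 2 + 2))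
        = a * q ^ (i - 2) / (b * q ^ j) := by
      rw [show (i : ℤ) + 1 + 1 = i - 2 + 4 by ring,
        show (j : ℤ) + 2 + 2 = j + 4 by ring, hz]
    rw [e1, e2, e3, e4,
      show i + 1 + 1 + 1 + (n : ℤ) = i + (n : ℤ) + 3 by ring,
      show i + 1 + 1 + 2 + (n : ℤ) = i + (n : ℤ) + 4 by ring,
      show (i : ℤ) + 1 + 1 + 2 = i + 4 by ring,
      show (i : ℤ) + 1 + 1 + 1 = i + 3 by ring,
      show (i : ℤ) + 1 + 1 = i + 2 by ring,
      show j + 2 + 2 + 1 + 2 * (n : ℤ) = j + 2 * (n : ℤ) + 5 by ring,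
      show (j : ℤ) + 2 + 2 + 1 = j + 5 by ring,
      show (j : ℤ) + 2 + 2 = j + 4 by ring]
    simp only [Nat.add_eq_one_iff]
    ring_nf
    simp
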